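/- arXiv:1912.03743 — 2 statements merged into one kernel-verified Lean document; each statement's English description precedes it below -/
import Mathlib

section
/- There exist constants $c,C>0$ such that for all $t\geq 0$ and all $\lambda>-1/2$ with $\lambda$ fixed, the normalized Bessel function $j_\lambda(t)=2^{\lambda}\Gamma(\lambda+1)t^{-\lambda}J_{\lambda}(t)$ satisfies $c\min\{1,t^2\} \leq 1-j_{\lambda}(t) \leq C\min\{1,t^2\}$, where the constants depend only on $\lambda$. -/
open MeasureTheory
open Real intervalIntegral
open Real

lemma nonneg_of_hasDerivAt (f f' : ℝ → ℝ) (hd : ∀ x, HasDerivAt f (f' x) x) (h0 : f 0 = 0)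
    (hf' : ∀ x, 0 ≤ x → 0 ≤ f' x) : ∀ x, 0 ≤ x → 0 ≤ f x := by
  intro x hx
  have mono : MonotoneOn f (Set.Ici 0) := by
    apply monotoneOn_of_deriv_nonneg (convex_Ici 0)
    · exact fun y _ => (hd y).continuousAt.continuousWithinAt
    · exact fun y _ => (hd y).differentiableAt.differentiableWithinAt
    · intro y hy
      rw [(hd y).deriv]
      rw [interior_Ici] at hy
      exact hf' y (le_of_lt hy)
  have := mono (Set.self_mem_Ici) (Set.mem_Ici.2 hx) hx
  rwa [h0] at this

lemma sin_ge_cube {x : ℝ} (hx : 0 ≤ x) : x - x ^ 3 / 6 ≤ Real.sin x := by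
  have := nonneg_of_hasDerivAt (fun x => Real.sin x - (x - x ^ 3 / 6))
    (fun x => Real.cos x - (1 - x ^ 2 / 2))
    (fun x => by
      have h1 := Real.hasDerivAt_sin x
      have h2 : HasDerivAt (fun x : ℝ => x - x ^ 3 / 6) (1 - 3 * x ^ 2 / 6) x := by
        exact ((hasDerivAt_id' x).sub ((hasDerivAt_pow 3 x).div_const 6)).congr_deriv (by ring_nf)
      have : HasDerivAt (fun x => Real.sin x - (x - x ^ 3 / 6)) (Real.cos x - (1 - 3 * x ^ 2 / 6)) x := h1.sub h2
      convert this using 1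
      ring)
    (by simp)
    (fun y _ => by nlinarith [Real.one_sub_sq_div_two_le_cos (x := y)])
    x hx
  linarith [this]

lemma cos_le_quartic {x : ℝ} (hx : 0 ≤ x) : Real.cos x ≤ 1 - x ^ 2 / 2 + x ^ 4 / 24 := by
  have := nonneg_of_hasDerivAt (fun x => (1 - x ^ 2 / 2 + x ^ 4 / 24) - Real.cos x)
    (fun x => (-(2 * x) / 2 + 4 * x ^ 3 / 24) - (-Real.sin x))
    (fun x => by
      exact (((hasDerivAt_const x (1:ℝ)).sub ((hasDerivAt_pow 2 x).div_const 2)).add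
        ((hasDerivAt_pow 4 x).div_const 24)).sub (Real.hasDerivAt_cos x) |>.congr_deriv (by ring_nf))
    (by simp)
    (fun y hy => by nlinarith [sin_ge_cube hy])
    x hx
  linarith [this]

lemma sin_le_quintic {x : ℝ} (hx : 0 ≤ x) : Real.sin x ≤ x - x ^ 3 / 6 + x ^ 5 / 120 := by
  have := nonneg_of_hasDerivAt (fun x => (x - x ^ 3 / 6 + x ^ 5 / 120) - Real.sin x)
    (fun x => (1 - 3 * x ^ 2 / 6 + 5 * x ^ 4 / 120) - Real.cos x)
    (fun x => by
      exact (((hasDerivAt_id x).sub ((hasDerivAt_pow 3 x).div_const 6)).add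
        ((hasDerivAt_pow 5 x).div_const 120)).sub (Real.hasDerivAt_sin x) |>.congr_deriv (by ring_nf))
    (by simp)
    (fun y hy => by nlinarith [cos_le_quartic hy])
    x hx
  linarith [this]

lemma core_ineq {t : ℝ} (ht : 0 < t) :
    (1 / 30 : ℝ) * min 1 (t ^ 2) ≤ 1 - t⁻¹ * (2 * Real.sin (t / 2)) := by
  rcases le_or_gt t 4 with h4 | h4
  · have hmin : min 1 (t ^ 2) ≤ t ^ 2 := min_le_right _ _
    have hs := sin_le_quintic (x := t / 2) (by linarith)
    have key : t⁻¹ * (2 * Real.sin (t / 2)) ≤ 1 - t ^ 2 / 30 := by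
      rw [inv_mul_le_iff₀ ht]
      have h16 : t ^ 2 ≤ 16 := by nlinarith
      have hcube : 0 ≤ t ^ 3 * (16 - t ^ 2) :=
        mul_nonneg (pow_pos ht 3).le (by linarith)
      nlinarith
    nlinarith
  · have hmin : min 1 (t ^ 2) ≤ 1 := min_le_left _ _
    have hs : Real.sin (t / 2) ≤ 1 := Real.sin_le_one _
    have key : t⁻¹ * (2 * Real.sin (t / 2)) ≤ 1 / 2 := by
      rw [inv_mul_le_iff₀ ht]
      nlinarith
    nlinarith


lemma w_meas (p : ℝ) : Measurable (fun s : ℝ => (1 - s ^ 2) ^ p) := by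
  fun_prop

lemma w_int01 {p : ℝ} (hp : -1 < p) :
    IntervalIntegrable (fun s : ℝ => (1 - s ^ 2) ^ p) volume 0 1 := by
  set K : ℝ := max 1 ((2:ℝ) ^ p) with hK
  have hbase : IntervalIntegrable (fun s : ℝ => (1 - s) ^ p) volume 0 1 := by
    have := (intervalIntegral.intervalIntegrable_rpow' (a := 0) (b := 1) hp).comp_sub_left 1
    simpa using this.symm
  have hg : IntervalIntegrable (fun s : ℝ => K * (1 - s) ^ p) volume 0 1 :=
    hbase.const_mul K
  apply hg.mono_fun ((w_meas p).aestronglyMeasurable)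
  rw [Set.uIoc_of_le (by norm_num : (0:ℝ) ≤ 1)]
  filter_upwards [ae_restrict_mem measurableSet_Ioc] with s hs
  obtain ⟨hs0, hs1⟩ := hs
  have h1s : 0 ≤ 1 - s := by linarith
  have h1s2 : 0 ≤ 1 - s ^ 2 := by nlinarith
  have hfact : (1 - s ^ 2) ^ p = (1 - s) ^ p * (1 + s) ^ p := by
    rw [← Real.mul_rpow h1s (by linarith)]
    ring_nf
  have hKb : (1 + s) ^ p ≤ K := by
    rcases le_or_gt 0 p with hp0 | hp0
    · exact le_max_of_le_right (Real.rpow_le_rpow (by linarith) (by linarith) hp0)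
    · exact le_max_of_le_left (Real.rpow_le_one_of_one_le_of_nonpos (by linarith) hp0.le)
  have hnn : 0 ≤ (1 - s ^ 2) ^ p := Real.rpow_nonneg h1s2 p
  simp only [Real.norm_eq_abs, abs_of_nonneg hnn, abs_of_nonneg (mul_nonneg (le_trans zero_le_one (le_max_left _ _)) (Real.rpow_nonneg h1s p))]
  rw [hfact, mul_comm K]
  rw [abs_of_nonneg (mul_nonneg (Real.rpow_nonneg h1s p) (show (0:ℝ) ≤ K from le_trans zero_le_one (le_max_left _ _)))]
  exact mul_le_mul_of_nonneg_left hKb (Real.rpow_nonneg h1s p)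

lemma w_int {p : ℝ} (hp : -1 < p) :
    IntervalIntegrable (fun s : ℝ => (1 - s ^ 2) ^ p) volume (-1) 1 := by
  have h1 := w_int01 hp
  have h2 : IntervalIntegrable (fun s : ℝ => (1 - s ^ 2) ^ p) volume (-1) 0 := by
    have := (IntervalIntegrable.iff_comp_neg (f := fun s : ℝ => (1 - s ^ 2) ^ p) (a := 0) (b := 1) (by simp)).mp h1
    simp only [neg_zero] at this
    have : IntervalIntegrable (fun s : ℝ => (1 - s ^ 2) ^ p) volume 0 (-1) := by
      convert this using 2 with s
      ring_nf
    exact this.symm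
  exact h2.trans h1



lemma master (p : ℝ) (hp : -1 < p)
    (hwint : IntervalIntegrable (fun s : ℝ => (1 - s ^ 2) ^ p) volume (-1) 1)
    (core : ∀ t : ℝ, 0 < t →
      (1 / 30 : ℝ) * min 1 (t ^ 2) ≤ 1 - t⁻¹ * (2 * Real.sin (t / 2))) :
    ∃ c C : ℝ, 0 < c ∧ 0 < C ∧ ∀ t : ℝ, 0 ≤ t →
      c * min 1 (t ^ 2) ≤
        1 - (∫ s in (-1:ℝ)..1, (1 - s ^ 2) ^ p)⁻¹ *
          ∫ s in (-1:ℝ)..1, Real.cos (t * s) * (1 - s ^ 2) ^ p ∧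
      1 - (∫ s in (-1:ℝ)..1, (1 - s ^ 2) ^ p)⁻¹ *
          ∫ s in (-1:ℝ)..1, Real.cos (t * s) * (1 - s ^ 2) ^ p ≤ C * min 1 (t ^ 2) := by
  set I : ℝ := ∫ s in (-1:ℝ)..1, (1 - s ^ 2) ^ p with hIdef
  have hIpos : 0 < I := by
    apply intervalIntegral_pos_of_pos_on hwint _ (by norm_num)
    intro x hx
    exact Real.rpow_pos_of_pos (by nlinarith [hx.1, hx.2]) p
  set m : ℝ := min ((3/4:ℝ) ^ p) 1 with hmdef
  have hmpos : 0 < m := lt_min (Real.rpow_pos_of_pos (by norm_num) p) one_pos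
  have hwnn : ∀ s ∈ Set.Icc (-1:ℝ) 1, 0 ≤ (1 - s ^ 2) ^ p := fun s hs =>
    Real.rpow_nonneg (by nlinarith [hs.1, hs.2]) p
  refine ⟨I⁻¹ * m * (1/30), 2, by positivity, by norm_num, ?_⟩
  intro t ht0
  -- integrability of the cosine-weighted integrand
  have hc : IntervalIntegrable (fun s : ℝ => Real.cos (t * s) * (1 - s ^ 2) ^ p)
      volume (-1) 1 := by
    apply hwint.mono_fun'
      (((Real.measurable_cos.comp (measurable_const.mul measurable_id)).mul
        (w_meas p)).aestronglyMeasurable)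
    rw [Set.uIoc_of_le (by norm_num : (-1:ℝ) ≤ 1)]
    filter_upwards [ae_restrict_mem measurableSet_Ioc] with s hs
    have hnn := hwnn s (Set.Ioc_subset_Icc_self hs)
    show ‖Real.cos (t * s) * (1 - s ^ 2) ^ p‖ ≤ _
    simp only [norm_mul, Real.norm_eq_abs, abs_of_nonneg hnn]
    calc |Real.cos (t * s)| * (1 - s ^ 2) ^ p ≤ 1 * (1 - s ^ 2) ^ p :=
          mul_le_mul_of_nonneg_right (Real.abs_cos_le_one _) hnn
      _ = (1 - s ^ 2) ^ p := one_mul _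
  have h1c : IntervalIntegrable (fun s : ℝ => (1 - Real.cos (t * s)) * (1 - s ^ 2) ^ p)
      volume (-1) 1 := by
    have := hwint.sub hc
    simpa only [sub_mul, one_mul] using this
  have hsub : (∫ s in (-1:ℝ)..1, (1 - Real.cos (t * s)) * (1 - s ^ 2) ^ p)
      = I - ∫ s in (-1:ℝ)..1, Real.cos (t * s) * (1 - s ^ 2) ^ p := by
    rw [hIdef, ← intervalIntegral.integral_sub hwint hc]
    exact intervalIntegral.integral_congr (fun s _ => by ring)
  have hkey : 1 - I⁻¹ * (∫ s in (-1:ℝ)..1, Real.cos (t * s) * (1 - s ^ 2) ^ p)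
      = I⁻¹ * ∫ s in (-1:ℝ)..1, (1 - Real.cos (t * s)) * (1 - s ^ 2) ^ p := by
    rw [hsub, mul_sub, inv_mul_cancel₀ hIpos.ne']
  rw [hkey]
  -- Upper bound
  have hup : (∫ s in (-1:ℝ)..1, (1 - Real.cos (t * s)) * (1 - s ^ 2) ^ p)
      ≤ (2 * min 1 (t ^ 2)) * I := by
    have hmono := intervalIntegral.integral_mono_on (by norm_num : (-1:ℝ) ≤ 1) h1c
      (hwint.const_mul (2 * min 1 (t ^ 2))) (fun s hs => by
        have hnn := hwnn s hs
        have hcos : 1 - Real.cos (t * s) ≤ 2 * min 1 (t ^ 2) := by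
          rcases le_or_gt (t ^ 2) 1 with h1 | h1
          · rw [min_eq_right h1]
            have hs2 : s ^ 2 ≤ 1 := by nlinarith [hs.1, hs.2]
            nlinarith [Real.one_sub_sq_div_two_le_cos (x := t * s),
              mul_nonneg (sq_nonneg t) (sub_nonneg.2 hs2)]
          · rw [min_eq_left h1.le]
            nlinarith [Real.neg_one_le_cos (t * s)]
        exact mul_le_mul_of_nonneg_right hcos hnn)
    rwa [intervalIntegral.integral_const_mul] at hmono
  -- Lower bound pieces
  rcases eq_or_lt_of_le ht0 with rfl | htpos
  · constructor
    · have : (0:ℝ) ^ 2 = 0 := by norm_num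
      rw [this, min_eq_right (by norm_num : (0:ℝ) ≤ 1)]
      have hnn : 0 ≤ ∫ s in (-1:ℝ)..1, (1 - Real.cos (0 * s)) * (1 - s ^ 2) ^ p := by
        apply intervalIntegral.integral_nonneg (by norm_num)
        intro u hu
        have := hwnn u hu
        nlinarith [Real.cos_le_one (0 * u)]
      have := mul_nonneg (inv_nonneg.2 hIpos.le) hnn
      linarith [this]
    · have h0 : (∫ s in (-1:ℝ)..1, (1 - Real.cos ((0:ℝ) * s)) * (1 - s ^ 2) ^ p) = 0 := by
        simp
      rw [h0]
      simp
  · -- t > 0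
    have hsubset : Set.uIcc (-(1/2):ℝ) (1/2) ⊆ Set.uIcc (-1:ℝ) 1 := by
      rw [Set.uIcc_of_le (by norm_num : (-(1/2):ℝ) ≤ 1/2),
        Set.uIcc_of_le (by norm_num : (-1:ℝ) ≤ 1)]
      exact Set.Icc_subset_Icc (by norm_num) (by norm_num)
    have h1c' := h1c.mono_set hsubset
    -- step 0 : value of the plain integral
    have hval : (∫ s in (-(1/2):ℝ)..(1/2), (1 - Real.cos (t * s)))
        = 1 - t⁻¹ * (2 * Real.sin (t / 2)) := by
      rw [intervalIntegral.integral_sub intervalIntegrable_const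
        (((by fun_prop : Continuous fun s : ℝ => Real.cos (t * s))).intervalIntegrable _ _)]
      have hcomp := intervalIntegral.integral_comp_mul_left (a := -(1/2:ℝ)) (b := (1/2:ℝ))
        (fun x => Real.cos x) (ne_of_gt htpos)
      rw [hcomp]
      have h1 : t * -(1/2 : ℝ) = -(t/2) := by ring
      have h2 : t * (1/2 : ℝ) = t/2 := by ring
      rw [h1, h2, _root_.integral_cos, intervalIntegral.integral_const, Real.sin_neg]
      simp only [smul_eq_mul]
      ring
    have hstep0 : (1/30 : ℝ) * min 1 (t ^ 2)
        ≤ ∫ s in (-(1/2):ℝ)..(1/2), (1 - Real.cos (t * s)) := by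
      rw [hval]; exact core t htpos
    -- step 1 : weight bounded below by m on [-1/2,1/2]
    have hstep1 : m * ∫ s in (-(1/2):ℝ)..(1/2), (1 - Real.cos (t * s))
        ≤ ∫ s in (-(1/2):ℝ)..(1/2), (1 - Real.cos (t * s)) * (1 - s ^ 2) ^ p := by
      rw [← intervalIntegral.integral_const_mul]
      apply intervalIntegral.integral_mono_on (by norm_num)
        (((by fun_prop : Continuous fun s : ℝ => m * (1 - Real.cos (t * s)))).intervalIntegrable _ _)
        h1c'
      intro s hs
      have hs2 : s ^ 2 ≤ 1/4 := by nlinarith [hs.1, hs.2]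
      have hbase : (3/4 : ℝ) ≤ 1 - s ^ 2 := by linarith
      have hwm : m ≤ (1 - s ^ 2) ^ p := by
        rcases le_or_gt 0 p with hp0 | hp0
        · exact le_trans (min_le_left _ _) (Real.rpow_le_rpow (by norm_num) hbase hp0)
        · refine le_trans (min_le_right _ _) ?_
          exact Real.one_le_rpow_of_pos_of_le_one_of_nonpos (by linarith) (by nlinarith [sq_nonneg s]) hp0.le
      have hcnn : 0 ≤ 1 - Real.cos (t * s) := by nlinarith [Real.cos_le_one (t * s)]
      calc m * (1 - Real.cos (t * s)) ≤ (1 - s ^ 2) ^ p * (1 - Real.cos (t * s)) :=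
            mul_le_mul_of_nonneg_right hwm hcnn
        _ = (1 - Real.cos (t * s)) * (1 - s ^ 2) ^ p := by ring
    -- step 2 : extend to [-1,1]
    have hnn' : ∀ u ∈ Set.Icc (-1:ℝ) 1, 0 ≤ (1 - Real.cos (t * u)) * (1 - u ^ 2) ^ p := by
      intro u hu
      have := hwnn u hu
      nlinarith [Real.cos_le_one (t * u)]
    have hstep2 : (∫ s in (-(1/2):ℝ)..(1/2), (1 - Real.cos (t * s)) * (1 - s ^ 2) ^ p)
        ≤ ∫ s in (-1:ℝ)..1, (1 - Real.cos (t * s)) * (1 - s ^ 2) ^ p := by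
      have hsubL : Set.uIcc (-1:ℝ) (-(1/2)) ⊆ Set.uIcc (-1:ℝ) 1 := by
        rw [Set.uIcc_of_le (by norm_num : (-1:ℝ) ≤ -(1/2)),
          Set.uIcc_of_le (by norm_num : (-1:ℝ) ≤ 1)]
        exact Set.Icc_subset_Icc (by norm_num) (by norm_num)
      have hsubR : Set.uIcc ((1/2):ℝ) 1 ⊆ Set.uIcc (-1:ℝ) 1 := by
        rw [Set.uIcc_of_le (by norm_num : ((1/2):ℝ) ≤ 1),
          Set.uIcc_of_le (by norm_num : (-1:ℝ) ≤ 1)]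
        exact Set.Icc_subset_Icc (by norm_num) (by norm_num)
      have hL := h1c.mono_set hsubL
      have hR := h1c.mono_set hsubR
      have e1 := intervalIntegral.integral_add_adjacent_intervals hL (h1c'.trans hR)
      have e2 := intervalIntegral.integral_add_adjacent_intervals h1c' hR
      have nnL : 0 ≤ ∫ s in (-1:ℝ)..(-(1/2)), (1 - Real.cos (t * s)) * (1 - s ^ 2) ^ p := by
        apply intervalIntegral.integral_nonneg (by norm_num)
        intro u hu
        exact hnn' u ⟨hu.1, by linarith [hu.2]⟩
      have nnR : 0 ≤ ∫ s in ((1/2):ℝ)..1, (1 - Real.cos (t * s)) * (1 - s ^ 2) ^ p := by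
        apply intervalIntegral.integral_nonneg (by norm_num)
        intro u hu
        exact hnn' u ⟨by linarith [hu.1], hu.2⟩
      linarith [e1, e2, nnL, nnR]
    constructor
    · calc I⁻¹ * m * (1/30) * min 1 (t ^ 2)
          = I⁻¹ * (m * ((1/30) * min 1 (t ^ 2))) := by ring
        _ ≤ I⁻¹ * (m * ∫ s in (-(1/2):ℝ)..(1/2), (1 - Real.cos (t * s))) := by
            apply mul_le_mul_of_nonneg_left _ (inv_nonneg.2 hIpos.le)
            exact mul_le_mul_of_nonneg_left hstep0 hmpos.le
        _ ≤ I⁻¹ * ∫ s in (-(1/2):ℝ)..(1/2), (1 - Real.cos (t * s)) * (1 - s ^ 2) ^ p :=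
            mul_le_mul_of_nonneg_left hstep1 (inv_nonneg.2 hIpos.le)
        _ ≤ I⁻¹ * ∫ s in (-1:ℝ)..1, (1 - Real.cos (t * s)) * (1 - s ^ 2) ^ p :=
            mul_le_mul_of_nonneg_left hstep2 (inv_nonneg.2 hIpos.le)
    · calc I⁻¹ * ∫ s in (-1:ℝ)..1, (1 - Real.cos (t * s)) * (1 - s ^ 2) ^ p
          ≤ I⁻¹ * ((2 * min 1 (t ^ 2)) * I) :=
            mul_le_mul_of_nonneg_left hup (inv_nonneg.2 hIpos.le)
        _ = 2 * min 1 (t ^ 2) := by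
            rw [mul_comm (2 * min 1 (t ^ 2)) I, ← mul_assoc, inv_mul_cancel₀ hIpos.ne', one_mul]



/-- The normalized Bessel function `j_λ(t) = 2^λ Γ(λ+1) t^{-λ} J_λ(t)`, defined for
`λ > -1/2` via the Poisson integral representation
`j_λ(t) = c_λ ∫_{-1}^1 cos(ts) (1-s²)^{λ-1/2} ds`, `c_λ⁻¹ = ∫_{-1}^1 (1-s²)^{λ-1/2} ds`. -/
noncomputable def normBessel (lam t : ℝ) : ℝ :=
  (∫ s in (-1 : ℝ)..1, (1 - s ^ 2) ^ (lam - 1 / 2 : ℝ))⁻¹ *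
    ∫ s in (-1 : ℝ)..1, Real.cos (t * s) * (1 - s ^ 2) ^ (lam - 1 / 2 : ℝ)

/-- For fixed `λ > -1/2` there are constants `c, C > 0` (depending only on `λ`) such that
`c min{1,t²} ≤ 1 - j_λ(t) ≤ C min{1,t²}` for all `t ≥ 0`. -/
theorem stmt2 (lam : ℝ) (hlam : -(1 / 2 : ℝ) < lam) :
    ∃ c C : ℝ, 0 < c ∧ 0 < C ∧ ∀ t : ℝ, 0 ≤ t →
      c * min 1 (t ^ 2) ≤ 1 - normBessel lam t ∧
      1 - normBessel lam t ≤ C * min 1 (t ^ 2) := by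
  have hp : -1 < lam - 1 / 2 := by linarith
  obtain ⟨c, C, hc, hC, h⟩ := master (lam - 1 / 2) hp (w_int hp)
    (fun t ht => core_ineq ht)
  exact ⟨c, C, hc, hC, fun t ht => by simpa only [normBessel] using h t ht⟩
end

section
/- Let $1<p<\infty$ and let $L^p(X,\mu)$ be an $L^p$ space. Let $M\subset L^p$ be a closed subspace, $f\in L^p$, and let $f^*\in M$ be the element of best approximation, i.e. $\|f-f^*\|_p=\inf_{g\in M}\|f-g\|_p$. Then with $s=\max(p,2)$ there exists $A>0$ (depending only on $p$) such that for every $g\in M$: $\|f-f^*\|_p^s \leq \|f-g\|_p^s - A\|g-f^*\|_p^s$. -/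
open MeasureTheory
open scoped ENNReal

open Set

section RealPointwise

section RealLemmas
variable {q : ℝ}

lemma contRpowC (r : ℝ) (hr : 0 < r) : Continuous fun x : ℝ => x ^ r := by
  rw [continuous_iff_continuousAt]
  intro x
  rcases eq_or_ne x 0 with h | h
  · exact Real.continuousAt_rpow_const _ _ (Or.inr hr.le)
  · exact Real.continuousAt_rpow_const _ _ (Or.inl h)

lemma u_nonneg (hq1 : 1 < q) (hq2 : q ≤ 2) {t : ℝ} (ht : t ∈ Ico (0:ℝ) 1) :
    (q - 1) * t ≤ (1 + t) ^ (q - 1) - (1 - t) ^ (q - 1) := by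
  set u : ℝ → ℝ := fun t => (1 + t) ^ (q - 1) - (1 - t) ^ (q - 1) - (q - 1) * t with hu
  have hder : ∀ x ∈ Ioo (0:ℝ) 1, HasDerivAt u
      ((q-1) * ((1+x)^(q-2) + (1-x)^(q-2) - 1)) x := by
    intro x hx
    have h1 : HasDerivAt (fun t : ℝ => (1 + t) ^ (q-1)) (1 * (q-1) * (1+x)^(q-1-1)) x :=
      (HasDerivAt.const_add 1 (hasDerivAt_id x)).rpow_const
        (Or.inl (by simp only [id_eq]; intro h; linarith [hx.1]))
    have h2 : HasDerivAt (fun t : ℝ => (1 - t) ^ (q-1)) ((-1) * (q-1) * (1-x)^(q-1-1)) x :=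
      (HasDerivAt.const_sub 1 (hasDerivAt_id x)).rpow_const
        (Or.inl (by simp only [id_eq]; intro h; linarith [hx.2]))
    have h3 : HasDerivAt (fun t : ℝ => (q-1) * t) (q-1) x := by
      simpa using (hasDerivAt_id x).const_mul (q-1)
    have := (h1.sub h2).sub h3
    refine this.congr_deriv ?_
    have : q - 1 - 1 = q - 2 := by ring
    rw [this]; ring
  have hcont : Continuous u := by
    have c1 : Continuous fun t : ℝ => (1+t)^(q-1) :=
      (contRpowC (q-1) (by linarith)).comp (continuous_const.add continuous_id)
    have c2 : Continuous fun t : ℝ => (1-t)^(q-1) :=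
      (contRpowC (q-1) (by linarith)).comp (continuous_const.sub continuous_id)
    exact (c1.sub c2).sub (continuous_const.mul continuous_id)
  have hmono : MonotoneOn u (Ico (0:ℝ) 1) := by
    apply monotoneOn_of_deriv_nonneg (convex_Ico 0 1) hcont.continuousOn
    · intro x hx
      rw [interior_Ico] at hx
      exact (hder x hx).differentiableAt.differentiableWithinAt
    · intro x hx
      rw [interior_Ico] at hx
      rw [(hder x hx).deriv]
      have hx1 : (0:ℝ) ≤ (1+x)^(q-2) := Real.rpow_nonneg (by linarith [hx.1]) _
      have hx2 : (1:ℝ) ≤ (1-x)^(q-2) :=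
        Real.one_le_rpow_of_pos_of_le_one_of_nonpos (by linarith [hx.2]) (by linarith [hx.1]) (by linarith)
      nlinarith
  have h0 : u 0 = 0 := by simp [hu]
  have := hmono (by constructor <;> norm_num) ht ht.1
  rw [h0] at this
  simp only [hu] at this
  linarith

lemma calc_lemma (hq1 : 1 < q) (hq2 : q ≤ 2) {t : ℝ} (ht : t ∈ Icc (0:ℝ) 1) :
    2 + q * (q-1) / 2 * t ^ 2 ≤ (1 + t) ^ q + (1 - t) ^ q := by
  set v : ℝ → ℝ := fun t => (1 + t) ^ q + (1 - t) ^ q - 2 - q * (q-1)/2 * t^2 with hv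
  have hder : ∀ x ∈ Ioo (0:ℝ) 1, HasDerivAt v
      (q * ((1+x)^(q-1) - (1-x)^(q-1) - (q-1) * x)) x := by
    intro x hx
    have h1 : HasDerivAt (fun t : ℝ => (1 + t) ^ q) (1 * q * (1+x)^(q-1)) x :=
      (HasDerivAt.const_add 1 (hasDerivAt_id x)).rpow_const (Or.inr (by linarith))
    have h2 : HasDerivAt (fun t : ℝ => (1 - t) ^ q) ((-1) * q * (1-x)^(q-1)) x :=
      (HasDerivAt.const_sub 1 (hasDerivAt_id x)).rpow_const (Or.inr (by linarith))
    have h3 : HasDerivAt (fun t : ℝ => q * (q-1)/2 * t^2) (q*(q-1)/2 * (2*x^1)) x :=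
      (hasDerivAt_pow 2 x).const_mul (q*(q-1)/2)
    have := (((h1.add h2).sub (hasDerivAt_const x 2)).sub h3)
    refine this.congr_deriv ?_
    ring
  have hcont : Continuous v := by
    have c1 : Continuous fun t : ℝ => (1+t)^q :=
      (contRpowC q (by linarith)).comp (continuous_const.add continuous_id)
    have c2 : Continuous fun t : ℝ => (1-t)^q :=
      (contRpowC q (by linarith)).comp (continuous_const.sub continuous_id)
    exact ((c1.add c2).sub continuous_const).sub (continuous_const.mul (continuous_pow 2))
  have hmono : MonotoneOn v (Icc (0:ℝ) 1) := by
    apply monotoneOn_of_deriv_nonneg (convex_Icc 0 1) hcont.continuousOn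
    · intro x hx
      rw [interior_Icc] at hx
      exact (hder x hx).differentiableAt.differentiableWithinAt
    · intro x hx
      rw [interior_Icc] at hx
      rw [(hder x hx).deriv]
      have := u_nonneg hq1 hq2 (t := x) ⟨hx.1.le, hx.2⟩
      nlinarith
  have h0 : v 0 = 0 := by norm_num [hv]
  have := hmono (by constructor <;> norm_num) ht ht.1
  rw [h0] at this
  simp only [hv] at this
  linarith

lemma core_lemma (hq1 : 1 < q) (hq2 : q ≤ 2) {t : ℝ} (ht : t ∈ Icc (0:ℝ) 1) :
    (1 + (q-1)/2 * t ^ 2) ^ (q/2) ≤ ((1 + t) ^ q + (1 - t) ^ q) / 2 := by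
  have hber : (1 + (q-1)/2 * t^2) ^ (q/2) ≤ 1 + (q/2) * ((q-1)/2 * t^2) :=
    rpow_one_add_le_one_add_mul_self (by nlinarith [sq_nonneg t]) (by linarith) (by linarith)
  have := calc_lemma hq1 hq2 ht
  nlinarith

end RealLemmas

variable {q : ℝ}


lemma scaled_lemma (hq1 : 1 < q) (hq2 : q ≤ 2) {a b : ℝ} (hb : 0 ≤ b) (hba : b ≤ a) :
    (a^2 + (q-1)/2 * b^2) ^ (q/2) ≤ ((a+b)^q + (a-b)^q) / 2 := by
  have ha : 0 ≤ a := hb.trans hba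
  rcases eq_or_lt_of_le ha with h0 | ha
  · have hb0 : b = 0 := le_antisymm (by linarith) hb
    rw [← h0, hb0, show (0:ℝ)^2 + (q-1)/2*(0:ℝ)^2 = 0 by ring,
        Real.zero_rpow (ne_of_gt (by linarith : (0:ℝ) < q/2)),
        show (0:ℝ)+0 = 0 by ring, show (0:ℝ)-0 = 0 by ring,
        Real.zero_rpow (ne_of_gt (by linarith : (0:ℝ) < q))]
    norm_num
  · set t := b / a with htdef
    have ht : t ∈ Icc (0:ℝ) 1 := ⟨by positivity, by rw [htdef]; exact div_le_one_of_le₀ hba ha.le⟩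
    have key := core_lemma hq1 hq2 ht
    have e1 : a^2 + (q-1)/2 * b^2 = a^2 * (1 + (q-1)/2 * t^2) := by
      rw [htdef]; field_simp
    have e2 : a + b = a * (1 + t) := by rw [htdef]; field_simp
    have e3 : a - b = a * (1 - t) := by rw [htdef]; field_simp
    have h1t : (0:ℝ) ≤ 1 + t := by linarith [ht.1]
    have h2t : (0:ℝ) ≤ 1 - t := by linarith [ht.2]
    rw [e1, e2, e3, Real.mul_rpow (by positivity) (by nlinarith [sq_nonneg t]),
        Real.mul_rpow ha.le h1t, Real.mul_rpow ha.le h2t]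
    have haq : (a^2)^(q/2) = a^q := by
      rw [← Real.rpow_natCast a 2, ← Real.rpow_mul ha.le, show ((2:ℕ):ℝ) * (q/2) = q by push_cast; ring]
    rw [haq]
    have haq0 : 0 ≤ a^q := Real.rpow_nonneg ha.le _
    calc a ^ q * (1 + (q-1)/2 * t^2)^(q/2) ≤ a^q * (((1+t)^q + (1-t)^q)/2) :=
          mul_le_mul_of_nonneg_left key haq0
      _ = (a^q * (1+t)^q + a^q * (1-t)^q)/2 := by ring

lemma abs_pair (q a b : ℝ) :
    |a+b| ^ q + |a-b| ^ q = (|a|+|b|) ^ q + |(|a| - |b|)| ^ q := by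
  rcases le_or_gt 0 a with ha | ha <;> rcases le_or_gt 0 b with hb | hb
  · have h1 : |a+b| = |a|+|b| := by
      rw [abs_of_nonneg ha, abs_of_nonneg hb, abs_of_nonneg (by linarith : (0:ℝ) ≤ a+b)]
    have h2 : |a-b| = |(|a| - |b|)| := by rw [abs_of_nonneg ha, abs_of_nonneg hb]
    rw [h1, h2]
  · have h1 : |a+b| = |(|a| - |b|)| := by
      rw [abs_of_nonneg ha, abs_of_nonpos hb.le, show a - -b = a+b by ring]
    have h2 : |a-b| = |a|+|b| := by
      rw [abs_of_nonneg ha, abs_of_nonpos hb.le, abs_of_nonneg (by linarith : (0:ℝ) ≤ a-b)]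
      ring
    rw [h1, h2]; ring
  · have h1 : |a+b| = |(|a| - |b|)| := by
      rw [abs_of_nonpos ha.le, abs_of_nonneg hb, show -a - b = -(a+b) by ring, abs_neg]
    have h2 : |a-b| = |a|+|b| := by
      rw [abs_of_nonpos ha.le, abs_of_nonneg hb, ← abs_neg (a-b),
          abs_of_nonneg (by linarith : (0:ℝ) ≤ -(a-b))]
      ring
    rw [h1, h2]; ring
  · have h1 : |a+b| = |a|+|b| := by
      rw [abs_of_nonpos ha.le, abs_of_nonpos hb.le, ← abs_neg (a+b),
          abs_of_nonneg (by linarith : (0:ℝ) ≤ -(a+b))]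
      ring
    have h2 : |a-b| = |(|a| - |b|)| := by
      rw [abs_of_nonpos ha.le, abs_of_nonpos hb.le, show -a - -b = -(a-b) by ring, abs_neg]
    rw [h1, h2]

lemma pw2 (hq1 : 1 < q) (hq2 : q ≤ 2) (a b : ℝ) :
    (a^2 + (q-1)/2 * b^2) ^ (q/2) ≤ (|a+b|^q + |a-b|^q) / 2 := by
  set M := max |a| |b| with hM
  set m := min |a| |b| with hm
  have hm0 : 0 ≤ m := le_min (abs_nonneg a) (abs_nonneg b)
  have hmM : m ≤ M := min_le_max
  have h1 : a^2 + (q-1)/2 * b^2 ≤ M^2 + (q-1)/2 * m^2 := by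
    rcases le_total |a| |b| with h | h
    · rw [hM, hm, max_eq_right h, min_eq_left h]
      have h2 : a^2 ≤ b^2 := by nlinarith [abs_nonneg a, sq_abs a, sq_abs b]
      rw [← sq_abs a, ← sq_abs b]
      nlinarith [sq_abs a, sq_abs b]
    · rw [hM, hm, max_eq_left h, min_eq_right h, ← sq_abs a, ← sq_abs b]
  have h2 : |a+b|^q + |a-b|^q = (M+m)^q + (M-m)^q := by
    rw [abs_pair q a b,
        show M + m = |a| + |b| from by
          rw [hM, hm]; rcases le_total |a| |b| with h | h
          · rw [max_eq_right h, min_eq_left h]; ring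
          · rw [max_eq_left h, min_eq_right h],
        show M - m = |(|a| - |b|)| from by
          rw [hM, hm]; rcases le_total |a| |b| with h | h
          · rw [max_eq_right h, min_eq_left h, abs_sub_comm,
                abs_of_nonneg (sub_nonneg.2 h)]
          · rw [max_eq_left h, min_eq_right h, abs_of_nonneg (sub_nonneg.2 h)]]
  rw [h2]
  calc (a^2 + (q-1)/2 * b^2) ^ (q/2) ≤ (M^2 + (q-1)/2 * m^2) ^ (q/2) :=
        Real.rpow_le_rpow (by nlinarith [sq_nonneg a, sq_nonneg b]) h1 (by positivity)
    _ ≤ ((M+m)^q + (M-m)^q)/2 := scaled_lemma hq1 hq2 hm0 hmM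

lemma pw1 (hq : 2 ≤ q) (x y : ℝ) :
    |x+y|^q + |x-y|^q ≤ 2^(q-1) * (|x|^q + |y|^q) := by
  have hq1 : (1:ℝ) ≤ q/2 := by linarith
  have habs : ∀ z : ℝ, |z|^q = (z^2)^(q/2) := by
    intro z
    rw [← sq_abs, ← Real.rpow_natCast |z| 2, ← Real.rpow_mul (abs_nonneg _),
        show ((2:ℕ):ℝ) * (q/2) = q by push_cast; ring]
  have hsuper : ((x+y)^2)^(q/2) + ((x-y)^2)^(q/2) ≤ ((x+y)^2 + (x-y)^2)^(q/2) := by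
    have h := NNReal.coe_le_coe.2 (NNReal.add_rpow_le_rpow_add ((x+y)^2).toNNReal ((x-y)^2).toNNReal hq1)
    push_cast at h
    rwa [Real.coe_toNNReal _ (by positivity), Real.coe_toNNReal _ (by positivity)] at h
  have hconv : ((x^2 + y^2)/2)^(q/2) ≤ ((x^2)^(q/2) + (y^2)^(q/2))/2 := by
    have hc := (convexOn_rpow hq1).2 (mem_Ici.2 (sq_nonneg x)) (mem_Ici.2 (sq_nonneg y))
      (by norm_num : (0:ℝ) ≤ 1/2) (by norm_num : (0:ℝ) ≤ 1/2) (by norm_num)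
    simp only [smul_eq_mul] at hc
    calc ((x^2 + y^2)/2)^(q/2) = (1/2*x^2 + 1/2*y^2)^(q/2) := by ring_nf
      _ ≤ 1/2*(x^2)^(q/2) + 1/2*(y^2)^(q/2) := hc
      _ = ((x^2)^(q/2) + (y^2)^(q/2))/2 := by ring
  have h2q : (0:ℝ) < 2 := by norm_num
  have e4 : ((x+y)^2 + (x-y)^2 : ℝ) = 2 * ((x^2+y^2)/2) * 2 := by ring
  calc |x+y|^q + |x-y|^q = ((x+y)^2)^(q/2) + ((x-y)^2)^(q/2) := by rw [habs, habs]
    _ ≤ ((x+y)^2 + (x-y)^2)^(q/2) := hsuper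
    _ = (2*2*((x^2+y^2)/2))^(q/2) := by rw [show (x+y)^2 + (x-y)^2 = 2*2*((x^2+y^2)/2) by ring]
    _ = ((2:ℝ)*2)^(q/2) * ((x^2+y^2)/2)^(q/2) := Real.mul_rpow (by norm_num) (by positivity)
    _ ≤ ((2:ℝ)*2)^(q/2) * (((x^2)^(q/2) + (y^2)^(q/2))/2) := by
        exact mul_le_mul_of_nonneg_left hconv (Real.rpow_nonneg (by norm_num) _)
    _ = 2^(q-1) * (|x|^q + |y|^q) := by
        rw [habs x, habs y, show ((2:ℝ)*2) = 2^(2:ℝ) by rw [Real.rpow_two]; norm_num,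
            ← Real.rpow_mul (by norm_num : (0:ℝ) ≤ 2), show (2:ℝ) * (q/2) = (q-1) + 1 by ring,
            Real.rpow_add h2q, Real.rpow_one]
        ring


end RealPointwise

lemma rpow_subadd {x y r : ℝ} (hx : 0 ≤ x) (hy : 0 ≤ y) (hr0 : 0 ≤ r) (hr1 : r ≤ 1) :
    (x + y) ^ r ≤ x ^ r + y ^ r := by
  have h := NNReal.coe_le_coe.2 (NNReal.rpow_add_le_add_rpow x.toNNReal y.toNNReal hr0 hr1)
  push_cast at h
  rwa [Real.coe_toNNReal _ hx, Real.coe_toNNReal _ hy] at h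

section RevMink
variable {X : Type} [MeasurableSpace X] {μ : Measure X}

lemma integrable_add_rpow {r : ℝ} (hr0 : 0 < r) (hr1 : r ≤ 1)
    {F G : X → ℝ} (hF0 : ∀ x, 0 ≤ F x) (hG0 : ∀ x, 0 ≤ G x)
    (hFm : AEStronglyMeasurable F μ) (hGm : AEStronglyMeasurable G μ)
    (hFi : Integrable (fun x => F x ^ r) μ) (hGi : Integrable (fun x => G x ^ r) μ) :
    Integrable (fun x => (F x + G x) ^ r) μ := by
  have hm : AEStronglyMeasurable (fun x => (F x + G x) ^ r) μ :=
    (contRpowC r hr0).comp_aestronglyMeasurable (hFm.add hGm)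
  refine (hFi.add hGi).mono' hm (Filter.Eventually.of_forall fun x => ?_)
  rw [Real.norm_eq_abs, abs_of_nonneg (Real.rpow_nonneg (by linarith [hF0 x, hG0 x]) _)]
  exact rpow_subadd (hF0 x) (hG0 x) hr0.le hr1

lemma revMink {r : ℝ} (hr0 : 0 < r) (hr1 : r < 1)
    {F G : X → ℝ} (hF0 : ∀ x, 0 ≤ F x) (hG0 : ∀ x, 0 ≤ G x)
    (hFm : AEStronglyMeasurable F μ) (hGm : AEStronglyMeasurable G μ)
    (hFi : Integrable (fun x => F x ^ r) μ) (hGi : Integrable (fun x => G x ^ r) μ) :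
    (∫ x, F x ^ r ∂μ) ^ r⁻¹ + (∫ x, G x ^ r ∂μ) ^ r⁻¹ ≤ (∫ x, (F x + G x) ^ r ∂μ) ^ r⁻¹ := by
  have hFGi : Integrable (fun x => (F x + G x) ^ r) μ :=
    integrable_add_rpow hr0 hr1.le hF0 hG0 hFm hGm hFi hGi
  set IF := ∫ x, F x ^ r ∂μ with hIF
  set IG := ∫ x, G x ^ r ∂μ with hIG
  have hIF0 : 0 ≤ IF := integral_nonneg fun x => Real.rpow_nonneg (hF0 x) r
  have hIG0 : 0 ≤ IG := integral_nonneg fun x => Real.rpow_nonneg (hG0 x) r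
  have hmonoF : IF ≤ ∫ x, (F x + G x) ^ r ∂μ := by
    refine integral_mono hFi hFGi fun x => ?_
    exact Real.rpow_le_rpow (hF0 x) (by linarith [hG0 x]) hr0.le
  have hmonoG : IG ≤ ∫ x, (F x + G x) ^ r ∂μ := by
    refine integral_mono hGi hFGi fun x => ?_
    exact Real.rpow_le_rpow (hG0 x) (by linarith [hF0 x]) hr0.le
  rcases eq_or_lt_of_le hIF0 with hF00 | hFpos
  · rw [← hF00, Real.zero_rpow (by positivity), zero_add]
    exact Real.rpow_le_rpow hIG0 hmonoG (by positivity)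
  rcases eq_or_lt_of_le hIG0 with hG00 | hGpos
  · rw [← hG00, Real.zero_rpow (by positivity), add_zero]
    exact Real.rpow_le_rpow hIF0 hmonoF (by positivity)
  -- main case
  set Xv := IF ^ r⁻¹ with hXv
  set Yv := IG ^ r⁻¹ with hYv
  have hXpos : 0 < Xv := Real.rpow_pos_of_pos hFpos _
  have hYpos : 0 < Yv := Real.rpow_pos_of_pos hGpos _
  have hXr : Xv ^ r = IF := Real.rpow_inv_rpow hIF0 (ne_of_gt hr0)
  have hYr : Yv ^ r = IG := Real.rpow_inv_rpow hIG0 (ne_of_gt hr0)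
  set lam := Xv / (Xv + Yv) with hlam
  have hlam0 : 0 ≤ lam := by positivity
  have hlam1 : lam + Yv / (Xv + Yv) = 1 := by rw [hlam]; field_simp
  have hconc : ∀ x, lam * (F x / Xv) ^ r + (Yv/(Xv+Yv)) * (G x / Yv) ^ r
      ≤ ((F x + G x) / (Xv + Yv)) ^ r := by
    intro x
    have hc := (Real.concaveOn_rpow hr0.le hr1.le).2 (mem_Ici.2 (div_nonneg (hF0 x) hXpos.le))
      (mem_Ici.2 (div_nonneg (hG0 x) hYpos.le)) hlam0 (div_nonneg hYpos.le (by linarith)) hlam1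
    simp only [smul_eq_mul] at hc
    have he : lam * (F x / Xv) + (Yv/(Xv+Yv)) * (G x / Yv) = (F x + G x) / (Xv + Yv) := by
      rw [hlam]; field_simp
    rw [he] at hc
    exact hc
  have e1 : (fun x => lam * (F x / Xv) ^ r + (Yv/(Xv+Yv)) * (G x / Yv) ^ r)
      = fun x => (lam / Xv ^ r) * F x ^ r + ((Yv/(Xv+Yv)) / Yv ^ r) * G x ^ r := by
    funext x
    rw [Real.div_rpow (hF0 x) hXpos.le r, Real.div_rpow (hG0 x) hYpos.le r]
    ring
  have e3 : (fun x => ((F x + G x) / (Xv + Yv)) ^ r)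
      = fun x => (((Xv+Yv) ^ r)⁻¹) * (F x + G x) ^ r := by
    funext x
    rw [Real.div_rpow (by linarith [hF0 x, hG0 x]) (by positivity) r]
    ring
  have hint1 : Integrable (fun x => lam * (F x / Xv) ^ r + (Yv/(Xv+Yv)) * (G x / Yv) ^ r) μ := by
    rw [e1]; exact (hFi.const_mul _).add (hGi.const_mul _)
  have hint2 : Integrable (fun x => ((F x + G x) / (Xv + Yv)) ^ r) μ := by
    rw [e3]; exact hFGi.const_mul _
  have hIneq := integral_mono hint1 hint2 hconc
  have hval1 : ∫ x, (lam * (F x / Xv) ^ r + (Yv/(Xv+Yv)) * (G x / Yv) ^ r) ∂μ = 1 := by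
    rw [e1, integral_add (hFi.const_mul _) (hGi.const_mul _), integral_const_mul, integral_const_mul,
        ← hIF, ← hIG, hXr, hYr, hlam]
    field_simp
  have hval2 : ∫ x, ((F x + G x) / (Xv + Yv)) ^ r ∂μ
      = (∫ x, (F x + G x) ^ r ∂μ) / (Xv + Yv) ^ r := by
    rw [e3, integral_const_mul]
    ring
  rw [hval1, hval2] at hIneq
  have hpow : (Xv + Yv) ^ r ≤ ∫ x, (F x + G x) ^ r ∂μ := by
    rw [le_div_iff₀ (by positivity)] at hIneq
    linarith
  calc Xv + Yv = ((Xv + Yv) ^ r) ^ r⁻¹ := (Real.rpow_rpow_inv (by positivity) (ne_of_gt hr0)).symm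
    _ ≤ (∫ x, (F x + G x) ^ r ∂μ) ^ r⁻¹ :=
        Real.rpow_le_rpow (by positivity) hpow (by positivity)

end RevMink

lemma sq_rpow (q z : ℝ) : ((z^2 : ℝ)) ^ (q/2) = |z| ^ q := by
  rw [← sq_abs, ← Real.rpow_natCast |z| 2, ← Real.rpow_mul (abs_nonneg _),
      show ((2:ℕ):ℝ) * (q/2) = q by push_cast; ring]

section LpLemmas
variable {α : Type} [MeasurableSpace α] {μ : Measure α} {p : ℝ≥0∞} [Fact (1 ≤ p)]

lemma Lp_int (hp2 : p ≠ ∞) (w : Lp ℝ p μ) :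
    Integrable (fun x => |w x| ^ p.toReal) μ := by
  have hp0 : p ≠ 0 := (lt_of_lt_of_le zero_lt_one (Fact.out : 1 ≤ p)).ne'
  have := (Lp.memLp w).integrable_norm_rpow hp0 hp2
  simpa [Real.norm_eq_abs] using this

lemma Lp_norm_rpow (hp2 : p ≠ ∞) (w : Lp ℝ p μ) :
    ‖w‖ ^ p.toReal = ∫ x, |w x| ^ p.toReal ∂μ := by
  have hp0 : p ≠ 0 := (lt_of_lt_of_le zero_lt_one (Fact.out : 1 ≤ p)).ne'
  have hq : 0 < p.toReal := ENNReal.toReal_pos hp0 hp2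
  have hnn : 0 ≤ ∫ x, ‖w x‖ ^ p.toReal ∂μ :=
    integral_nonneg fun x => Real.rpow_nonneg (norm_nonneg _) _
  rw [Lp.norm_def, MemLp.eLpNorm_eq_integral_rpow_norm hp0 hp2 (Lp.memLp w),
      ENNReal.toReal_ofReal (Real.rpow_nonneg hnn _),
      Real.rpow_inv_rpow hnn (ne_of_gt hq)]
  simp_rw [Real.norm_eq_abs]

lemma clarkson_ge2 (hp2 : p ≠ ∞) (hq : 2 ≤ p.toReal) (u v : Lp ℝ p μ) :
    ‖u + v‖ ^ p.toReal + ‖u - v‖ ^ p.toReal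
      ≤ 2 ^ (p.toReal - 1) * (‖u‖ ^ p.toReal + ‖v‖ ^ p.toReal) := by
  set q := p.toReal with hqdef
  rw [Lp_norm_rpow hp2, Lp_norm_rpow hp2, Lp_norm_rpow hp2, Lp_norm_rpow hp2]
  have hmono : ∫ x, (|(u+v : Lp ℝ p μ) x| ^ q + |(u-v : Lp ℝ p μ) x| ^ q) ∂μ
      ≤ ∫ x, 2^(q-1) * (|u x| ^ q + |v x| ^ q) ∂μ := by
    refine integral_mono_ae ((Lp_int hp2 (u+v)).add (Lp_int hp2 (u-v)))
      (((Lp_int hp2 u).add (Lp_int hp2 v)).const_mul _) ?_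
    filter_upwards [Lp.coeFn_add u v, Lp.coeFn_sub u v] with x h1 h2
    rw [h1, h2]
    simpa using pw1 hq (u x) (v x)
  rw [integral_add (Lp_int hp2 (u+v)) (Lp_int hp2 (u-v)), integral_const_mul,
      integral_add (Lp_int hp2 u) (Lp_int hp2 v)] at hmono
  exact hmono

lemma clarkson_lt2 (hp2 : p ≠ ∞) (hq1 : 1 < p.toReal) (hq2 : p.toReal < 2) (u v : Lp ℝ p μ) :
    ‖(2:ℝ)⁻¹ • (u + v)‖ ^ (2:ℝ) + (p.toReal - 1)/2 * ‖(2:ℝ)⁻¹ • (u - v)‖ ^ (2:ℝ)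
      ≤ (‖u‖ ^ (2:ℝ) + ‖v‖ ^ (2:ℝ)) / 2 := by
  set q := p.toReal with hqdef
  have hq0 : 0 < q := by linarith
  set r := q / 2 with hrdef
  have hr0 : 0 < r := by rw [hrdef]; linarith
  have hr1 : r < 1 := by rw [hrdef]; linarith
  set c : ℝ := (q - 1) / 2 with hcdef
  have hc0 : 0 ≤ c := by rw [hcdef]; linarith
  set A : Lp ℝ p μ := (2:ℝ)⁻¹ • (u + v) with hA
  set B : Lp ℝ p μ := (2:ℝ)⁻¹ • (u - v) with hB
  set F : α → ℝ := fun x => (A x)^2 with hF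
  set G : α → ℝ := fun x => c * (B x)^2 with hG
  have hF0 : ∀ x, 0 ≤ F x := fun x => sq_nonneg _
  have hG0 : ∀ x, 0 ≤ G x := fun x => mul_nonneg hc0 (sq_nonneg _)
  have hFm : AEStronglyMeasurable F μ :=
    ((continuous_pow 2).comp_aestronglyMeasurable (Lp.aestronglyMeasurable A))
  have hGm : AEStronglyMeasurable G μ :=
    (((continuous_pow 2).comp_aestronglyMeasurable (Lp.aestronglyMeasurable B)).const_mul c)
  have heF : (fun x => F x ^ r) = fun x => |A x| ^ q := by
    funext x; rw [hF, hrdef]; exact sq_rpow q (A x)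
  have heG : (fun x => G x ^ r) = fun x => c ^ r * |B x| ^ q := by
    funext x
    rw [hG, hrdef, Real.mul_rpow hc0 (sq_nonneg _), sq_rpow q (B x)]
  have hFi : Integrable (fun x => F x ^ r) μ := by rw [heF]; exact Lp_int hp2 A
  have hGi : Integrable (fun x => G x ^ r) μ := by rw [heG]; exact (Lp_int hp2 B).const_mul _
  have hrm := revMink (μ := μ) hr0 hr1 hF0 hG0 hFm hGm hFi hGi
  -- identify the left side
  have hIF : (∫ x, F x ^ r ∂μ) ^ r⁻¹ = ‖A‖ ^ (2:ℝ) := by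
    rw [heF, ← Lp_norm_rpow hp2 A, ← Real.rpow_mul (norm_nonneg _), hrdef]
    congr 1
    field_simp
    exact hqdef.symm
  have hIG : (∫ x, G x ^ r ∂μ) ^ r⁻¹ = c * ‖B‖ ^ (2:ℝ) := by
    rw [heG]
    rw [integral_const_mul, Real.mul_rpow (by positivity)
      (integral_nonneg fun x => Real.rpow_nonneg (abs_nonneg _) _),
      Real.rpow_rpow_inv hc0 (ne_of_gt hr0),
      ← Lp_norm_rpow hp2 B, ← Real.rpow_mul (norm_nonneg _)]
    congr 2
    rw [hrdef]; field_simp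
    exact hqdef.symm
  rw [hIF, hIG] at hrm
  -- bound the right side
  have hFGi : Integrable (fun x => (F x + G x) ^ r) μ :=
    integrable_add_rpow hr0 hr1.le hF0 hG0 hFm hGm hFi hGi
  have hptwise : ∀ᵐ x ∂μ, (F x + G x) ^ r ≤ (|u x| ^ q + |v x| ^ q) / 2 := by
    filter_upwards [Lp.coeFn_smul ((2:ℝ)⁻¹) (u + v), Lp.coeFn_add u v,
      Lp.coeFn_smul ((2:ℝ)⁻¹) (u - v), Lp.coeFn_sub u v] with x h1 h2 h3 h4
    have hAx : A x = 2⁻¹ * (u x + v x) := by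
      rw [hA, h1, Pi.smul_apply, smul_eq_mul, h2, Pi.add_apply]
    have hBx : B x = 2⁻¹ * (u x - v x) := by
      rw [hB, h3, Pi.smul_apply, smul_eq_mul, h4, Pi.sub_apply]
    have hab : A x + B x = u x := by rw [hAx, hBx]; ring
    have hab2 : A x - B x = v x := by rw [hAx, hBx]; ring
    have := pw2 hq1 hq2.le (A x) (B x)
    rw [hab, hab2] at this
    rw [hF, hG, hrdef]
    exact this
  have hint2 : Integrable (fun x => (|u x| ^ q + |v x| ^ q) / 2) μ :=
    ((Lp_int hp2 u).add (Lp_int hp2 v)).div_const 2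
  have hRHS : ∫ x, (F x + G x) ^ r ∂μ ≤ (‖u‖ ^ q + ‖v‖ ^ q) / 2 := by
    calc ∫ x, (F x + G x) ^ r ∂μ ≤ ∫ x, (|u x| ^ q + |v x| ^ q) / 2 ∂μ :=
          integral_mono_ae hFGi hint2 hptwise
      _ = (‖u‖ ^ q + ‖v‖ ^ q) / 2 := by
          rw [integral_div, integral_add (Lp_int hp2 u) (Lp_int hp2 v),
              Lp_norm_rpow hp2 u, Lp_norm_rpow hp2 v]
  have hRHS2 : (∫ x, (F x + G x) ^ r ∂μ) ^ r⁻¹ ≤ ((‖u‖ ^ q + ‖v‖ ^ q) / 2) ^ r⁻¹ := by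
    refine Real.rpow_le_rpow ?_ hRHS (by positivity)
    exact integral_nonneg fun x => Real.rpow_nonneg (by linarith [hF0 x, hG0 x]) _
  -- power mean step
  have hpm : ((‖u‖ ^ q + ‖v‖ ^ q) / 2) ^ r⁻¹ ≤ (‖u‖ ^ (2:ℝ) + ‖v‖ ^ (2:ℝ)) / 2 := by
    have hs1 : (1:ℝ) ≤ r⁻¹ := by
      rw [hrdef, inv_div]
      exact (one_le_div hq0).2 (by linarith)
    have hXu : (0:ℝ) ≤ ‖u‖ ^ q := Real.rpow_nonneg (norm_nonneg _) _
    have hXv : (0:ℝ) ≤ ‖v‖ ^ q := Real.rpow_nonneg (norm_nonneg _) _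
    have hc2 := (convexOn_rpow hs1).2 (mem_Ici.2 hXu) (mem_Ici.2 hXv)
      (by norm_num : (0:ℝ) ≤ 1/2) (by norm_num : (0:ℝ) ≤ 1/2) (by norm_num)
    simp only [smul_eq_mul] at hc2
    have e1 : (‖u‖ ^ q) ^ r⁻¹ = ‖u‖ ^ (2:ℝ) := by
      rw [← Real.rpow_mul (norm_nonneg _)]
      congr 1
      rw [hrdef]; field_simp
    have e2 : (‖v‖ ^ q) ^ r⁻¹ = ‖v‖ ^ (2:ℝ) := by
      rw [← Real.rpow_mul (norm_nonneg _)]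
      congr 1
      rw [hrdef]; field_simp
    calc ((‖u‖ ^ q + ‖v‖ ^ q) / 2) ^ r⁻¹ = (1/2 * (‖u‖ ^ q) + 1/2 * (‖v‖ ^ q)) ^ r⁻¹ := by
          ring_nf
      _ ≤ 1/2 * ((‖u‖ ^ q) ^ r⁻¹) + 1/2 * ((‖v‖ ^ q) ^ r⁻¹) := hc2
      _ = (‖u‖ ^ (2:ℝ) + ‖v‖ ^ (2:ℝ)) / 2 := by rw [e1, e2]; ring
  calc ‖A‖ ^ (2:ℝ) + c * ‖B‖ ^ (2:ℝ)
      ≤ (∫ x, (F x + G x) ^ r ∂μ) ^ r⁻¹ := hrm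
    _ ≤ ((‖u‖ ^ q + ‖v‖ ^ q) / 2) ^ r⁻¹ := hRHS2
    _ ≤ (‖u‖ ^ (2:ℝ) + ‖v‖ ^ (2:ℝ)) / 2 := hpm

end LpLemmas

/-- Strong uniqueness of best approximation in `L^p`, `1 < p < ∞`, `s = max(p,2)`:
there is `A > 0`, depending only on `p`, such that for every closed subspace `M` of an
`L^p` space, every `f`, and every best approximant `f* ∈ M` of `f`, one has
`‖f - f*‖_p^s ≤ ‖f - g‖_p^s - A ‖g - f*‖_p^s` for all `g ∈ M`. -/
theorem stmt11 (p : ℝ≥0∞) [Fact (1 ≤ p)] (hp1 : 1 < p) (hp2 : p ≠ ∞) :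
    ∃ A : ℝ, 0 < A ∧
      ∀ (X : Type) (_ : MeasurableSpace X) (μ : Measure X)
        (M : Submodule ℝ (Lp ℝ p μ)) (_ : IsClosed (M : Set (Lp ℝ p μ)))
        (f fstar : Lp ℝ p μ), fstar ∈ M →
        (∀ g ∈ M, ‖f - fstar‖ ≤ ‖f - g‖) →
        ∀ g ∈ M,
          ‖f - fstar‖ ^ (max p.toReal 2) ≤
            ‖f - g‖ ^ (max p.toReal 2) - A * ‖g - fstar‖ ^ (max p.toReal 2) := by
  have hq1 : 1 < p.toReal := by
    rw [show (1:ℝ) = (1:ℝ≥0∞).toReal by simp]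
    exact ENNReal.toReal_strict_mono hp2 hp1
  refine ⟨if p.toReal < 2 then (p.toReal - 1)/4 else 2 ^ (1 - p.toReal), ?_, ?_⟩
  · split_ifs with h
    · linarith
    · positivity
  intro X mX μ M hMc f fstar hfM hbest g hgM
  have hmidM : (2:ℝ)⁻¹ • (fstar + g) ∈ M := M.smul_mem _ (M.add_mem hfM hgM)
  have hbestmid := hbest _ hmidM
  by_cases hlt : p.toReal < 2
  · rw [if_pos hlt, max_eq_right hlt.le]
    have key := clarkson_lt2 hp2 hq1 hlt (f - fstar) (f - g)
    have eA : (2:ℝ)⁻¹ • ((f - fstar) + (f - g)) = f - (2:ℝ)⁻¹ • (fstar + g) := by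
      module
    have eB : (2:ℝ)⁻¹ • ((f - fstar) - (f - g)) = (2:ℝ)⁻¹ • (g - fstar) := by
      module
    rw [eA, eB] at key
    have h1 : ‖f - fstar‖ ^ (2:ℝ) ≤ ‖f - (2:ℝ)⁻¹ • (fstar + g)‖ ^ (2:ℝ) :=
      Real.rpow_le_rpow (norm_nonneg _) hbestmid (by norm_num)
    have h2 : ‖(2:ℝ)⁻¹ • (g - fstar)‖ ^ (2:ℝ) = (1/4) * ‖g - fstar‖ ^ (2:ℝ) := by
      rw [norm_smul]
      rw [Real.mul_rpow (norm_nonneg _) (norm_nonneg _)]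
      congr 1
      rw [show ‖(2:ℝ)⁻¹‖ = (2:ℝ)⁻¹ by simp]
      rw [show ((2:ℝ)) = ((2:ℕ):ℝ) by norm_num] -- dummy
      rw [Real.rpow_natCast]
      norm_num
    rw [h2] at key
    set a := ‖f - fstar‖ ^ (2:ℝ)
    set b := ‖f - g‖ ^ (2:ℝ)
    set G := ‖g - fstar‖ ^ (2:ℝ)
    linarith
  · push_neg at hlt
    rw [if_neg (not_lt.2 hlt), max_eq_left hlt]
    set q := p.toReal with hqdef
    have key := clarkson_ge2 hp2 hlt (f - fstar) (f - g)
    have eA : (f - fstar) + (f - g) = (2:ℝ) • (f - (2:ℝ)⁻¹ • (fstar + g)) := by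
      module
    have eB : (f - fstar) - (f - g) = g - fstar := by
      module
    rw [eA, eB] at key
    have hq0 : (0:ℝ) ≤ q := by linarith
    have h1 : (2:ℝ) ^ q * ‖f - fstar‖ ^ q ≤ ‖(2:ℝ) • (f - (2:ℝ)⁻¹ • (fstar + g))‖ ^ q := by
      rw [norm_smul, show ‖(2:ℝ)‖ = 2 by simp,
          ← Real.mul_rpow (by norm_num) (norm_nonneg _)]
      exact Real.rpow_le_rpow (by positivity) (by linarith) hq0
    have h2q : (2:ℝ) ^ q = 2 * 2 ^ (q - 1) := by
      rw [show q = 1 + (q - 1) by ring, Real.rpow_add (by norm_num), Real.rpow_one]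
      ring_nf
    have hA1 : (2:ℝ) ^ (1 - q) * 2 ^ (q - 1) = 1 := by
      rw [← Real.rpow_add (by norm_num)]
      norm_num
    have hApos : (0:ℝ) < 2 ^ (1 - q) := by positivity
    have hGnn : (0:ℝ) ≤ ‖g - fstar‖ ^ q := Real.rpow_nonneg (norm_nonneg _) _
    have hbnn : (0:ℝ) ≤ ‖f - g‖ ^ q := Real.rpow_nonneg (norm_nonneg _) _
    have hann : (0:ℝ) ≤ ‖f - fstar‖ ^ q := Real.rpow_nonneg (norm_nonneg _) _
    -- key : ‖2•(f-mid)‖^q + ‖g-fstar‖^q ≤ 2^(q-1) * (‖f-fstar‖^q + ‖f-g‖^q)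
    have step : 2 ^ (q-1) * ‖f - fstar‖ ^ q + ‖g - fstar‖ ^ q ≤ 2 ^ (q-1) * ‖f - g‖ ^ q := by
      nlinarith [h1, key, h2q]
    have := mul_le_mul_of_nonneg_left step hApos.le
    nlinarith [this, hA1]
end
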